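/- arXiv:1012.4147 — 4 statements merged into one kernel-verified Lean document; each statement's English description precedes it below -/
import Mathlib

section
/- Let C = [0,∞)^n with the Euclidean metric and let X ⊆ C be a union of coordinate faces of C, equipped with its induced path (length) metric d_X. Then for all p, q ∈ X, d_C(p,q) ≤ d_X(p,q) ≤ √2 · d_C(p,q). -/
/-- The intrinsic path (length) pseudo-distance on a subset `X` of a normed space:
the infimum of lengths (total variations) of continuous paths inside `X`. -/
noncomputable def pathDist {E : Type*} [NormedAddCommGroup E] (X : Set E) (p q : E) : ENNReal :=
  sInf {L | ∃ γ : ℝ → E, ContinuousOn γ (Set.Icc 0 1) ∧ (∀ t ∈ Set.Icc (0 : ℝ) 1, γ t ∈ X) ∧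
    γ 0 = p ∧ γ 1 = q ∧ L = eVariationOn γ (Set.Icc 0 1)}

lemma evar_le_of_lip {E : Type*} [NormedAddCommGroup E] {γ : ℝ → E} {a b : ℝ} {C : NNReal}
    (hab : a ≤ b) (h : LipschitzOnWith C γ (Set.Icc a b)) :
    eVariationOn γ (Set.Icc a b) ≤ C * ENNReal.ofReal (b - a) := by
  have h1 : eVariationOn id (Set.Icc a b) ≤ ENNReal.ofReal (b - a) := by
    have := (monotone_id.monotoneOn (Set.Icc a b)).eVariationOn_le
      (Set.left_mem_Icc.2 hab) (Set.right_mem_Icc.2 hab)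
    simpa [Set.inter_self] using this
  calc eVariationOn γ (Set.Icc a b) = eVariationOn (γ ∘ id) (Set.Icc a b) := rfl
    _ ≤ C * eVariationOn id (Set.Icc a b) :=
        h.comp_eVariationOn_le (Set.mapsTo_id _)
    _ ≤ C * ENNReal.ofReal (b - a) := mul_le_mul_right h1 _

lemma seg_lip {E : Type*} [NormedAddCommGroup E] [NormedSpace ℝ E] {γ : ℝ → E} {a b : ℝ}
    (p u : E) (hf : ∀ t ∈ Set.Icc a b, γ t = p + t • u) :
    LipschitzOnWith ‖u‖₊ γ (Set.Icc a b) := by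
  apply LipschitzOnWith.of_dist_le_mul
  intro x hx y hy
  rw [hf x hx, hf y hy, dist_eq_norm]
  have : p + x • u - (p + y • u) = (x - y) • u := by module
  rw [this, norm_smul, Real.dist_eq, coe_nnnorm]
  rw [Real.norm_eq_abs]; ring_nf; rw [mul_comm]

/-- cube lemma: if `X ⊆ [0,∞)^n` is a union of coordinate faces
(closed under sub-faces) then the intrinsic path metric `d_X` on `X` satisfies
`d_C(p,q) ≤ d_X(p,q) ≤ √2 · d_C(p,q)` for the Euclidean metric `d_C`. -/
theorem cube_lemma (n : ℕ) (F : Finset (Finset (Fin n)))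
    (hsub : ∀ S ∈ F, ∀ T ⊆ S, T ∈ F)
    (X : Set (EuclideanSpace ℝ (Fin n)))
    (hX : X = {x | (∀ i, 0 ≤ x i) ∧ ∃ S ∈ F, ∀ i, x i ≠ 0 → i ∈ S})
    (p q : EuclideanSpace ℝ (Fin n)) (hp : p ∈ X) (hq : q ∈ X) :
    ENNReal.ofReal (dist p q) ≤ pathDist X p q ∧
      pathDist X p q ≤ ENNReal.ofReal (Real.sqrt 2 * dist p q) := by
  constructor
  · apply le_sInf
    rintro L ⟨γ, hc, hm, h0, h1, rfl⟩
    calc ENNReal.ofReal (dist p q) = edist p q := (edist_dist p q).symm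
      _ = edist (γ 0) (γ 1) := by rw [h0, h1]
      _ ≤ eVariationOn γ (Set.Icc 0 1) :=
          eVariationOn.edist_le γ ⟨le_rfl, zero_le_one⟩ ⟨zero_le_one, le_rfl⟩
  · rw [hX] at hp hq
    obtain ⟨hp1, Sp, hSp, hp2⟩ := hp
    obtain ⟨hq1, Sq, hSq, hq2⟩ := hq
    set r : EuclideanSpace ℝ (Fin n) := WithLp.toLp 2 (fun i => min (p i) (q i)) with hrdef
    set u : EuclideanSpace ℝ (Fin n) := (2:ℝ) • (r - p) with hudef
    set w : EuclideanSpace ℝ (Fin n) := (2:ℝ) • (q - r) with hwdef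
    set γ : ℝ → EuclideanSpace ℝ (Fin n) :=
      fun t => p + (min t (1/2)) • u + (max (t - 1/2) 0) • w with hγdef
    have hγeq : ∀ t, γ t = p + (min t (1/2)) • u + (max (t - 1/2) 0) • w := fun _ => rfl
    have hγ1 : ∀ t ∈ Set.Icc (0:ℝ) (1/2), γ t = p + t • u := by
      intro t ht
      have h1 : min t (1/2) = t := min_eq_left ht.2
      have h2 : max (t - 1/2) 0 = 0 := max_eq_right (by linarith [ht.2])
      rw [hγeq, h1, h2, zero_smul, add_zero]
    have hγ2 : ∀ t ∈ Set.Icc (1/2:ℝ) 1, γ t = (p + (1/2:ℝ) • u - (1/2:ℝ) • w) + t • w := by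
      intro t ht
      have h1 : min t (1/2) = 1/2 := min_eq_right ht.1
      have h2 : max (t - 1/2) 0 = t - 1/2 := max_eq_left (by linarith [ht.1])
      rw [hγeq, h1, h2]
      module
    have hcoord1 : ∀ t, ∀ i, (p + t • u) i = (1 - 2*t) * p i + (2*t) * min (p i) (q i) := by
      intro t i
      simp [hudef, hrdef, PiLp.add_apply, PiLp.smul_apply, PiLp.sub_apply, smul_eq_mul]
      ring
    have hcoord2 : ∀ t, ∀ i,
        ((p + (1/2:ℝ) • u - (1/2:ℝ) • w) + t • w) i
          = (2 - 2*t) * min (p i) (q i) + (2*t - 1) * q i := by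
      intro t i
      simp [hudef, hwdef, hrdef, PiLp.add_apply, PiLp.smul_apply, PiLp.sub_apply, smul_eq_mul]
      ring
    have hγ0 : γ 0 = p := by
      rw [hγ1 0 ⟨le_rfl, by norm_num⟩]; simp
    have hγend : γ 1 = q := by
      rw [hγ2 1 ⟨by norm_num, le_rfl⟩]
      ext i
      rw [hcoord2]
      norm_num
    have hcont : ContinuousOn γ (Set.Icc 0 1) := by
      apply Continuous.continuousOn
      fun_prop
    have hmem : ∀ t ∈ Set.Icc (0:ℝ) 1, γ t ∈ X := by
      intro t ht
      rw [hX]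
      rcases le_total t (1/2) with h | h
      · rw [hγ1 t ⟨ht.1, h⟩]
        refine ⟨fun i => ?_, Sp, hSp, fun i hi => ?_⟩
        · rw [hcoord1]
          have h1 := hp1 i; have h2 := hq1 i
          have h3 : (0:ℝ) ≤ min (p i) (q i) := le_min h1 h2
          nlinarith [ht.1]
        · apply hp2
          intro hpi
          rw [hcoord1, hpi] at hi
          apply hi
          rw [min_eq_left (hq1 i)]
          ring
      · rw [hγ2 t ⟨h, ht.2⟩]
        refine ⟨fun i => ?_, Sq, hSq, fun i hi => ?_⟩
        · rw [hcoord2]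
          have h1 := hp1 i; have h2 := hq1 i
          have h3 : (0:ℝ) ≤ min (p i) (q i) := le_min h1 h2
          nlinarith [ht.2]
        · apply hq2
          intro hqi
          rw [hcoord2, hqi] at hi
          apply hi
          rw [min_eq_right (hp1 i)]
          ring
    -- variation bound
    have hsplit : eVariationOn γ (Set.Icc 0 1)
        = eVariationOn γ (Set.Icc 0 (1/2)) + eVariationOn γ (Set.Icc (1/2) 1) := by
      have := eVariationOn.Icc_add_Icc γ (s := (Set.univ : Set ℝ))
        (show (0:ℝ) ≤ 1/2 by norm_num) (show (1/2:ℝ) ≤ 1 by norm_num) (Set.mem_univ _)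
      simpa [Set.univ_inter] using this.symm
    have hv1 : eVariationOn γ (Set.Icc 0 (1/2))
        ≤ (‖u‖₊ : ENNReal) * ENNReal.ofReal (1/2 - 0) :=
      evar_le_of_lip (by norm_num) (seg_lip p u hγ1)
    have hv2 : eVariationOn γ (Set.Icc (1/2) 1)
        ≤ (‖w‖₊ : ENNReal) * ENNReal.ofReal (1 - 1/2) :=
      evar_le_of_lip (by norm_num) (seg_lip _ w hγ2)
    have hconv : ∀ v : EuclideanSpace ℝ (Fin n),
        (‖v‖₊ : ENNReal) * ENNReal.ofReal (1/2) = ENNReal.ofReal (‖v‖ / 2) := by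
      intro v
      rw [← enorm_eq_nnnorm, ← ofReal_norm, ← ENNReal.ofReal_mul (norm_nonneg _), mul_one_div]
    have hlen : eVariationOn γ (Set.Icc 0 1) ≤ ENNReal.ofReal (‖u‖/2 + ‖w‖/2) := by
      rw [hsplit, ENNReal.ofReal_add (by positivity) (by positivity)]
      apply add_le_add
      · refine hv1.trans ?_
        rw [show (1/2 - 0 : ℝ) = 1/2 by norm_num, hconv]
      · refine hv2.trans ?_
        rw [show (1 - 1/2 : ℝ) = 1/2 by norm_num, hconv]
    -- real inequality
    have hsq : ∀ v : EuclideanSpace ℝ (Fin n), ‖v‖^2 = ∑ i, (v i)^2 := by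
      intro v
      rw [EuclideanSpace.norm_eq, Real.sq_sqrt (by positivity)]
      exact Finset.sum_congr rfl fun i _ => by rw [Real.norm_eq_abs, sq_abs]
    have hAu : ‖u‖/2 = ‖r - p‖ := by
      rw [hudef, norm_smul, Real.norm_ofNat]; ring
    have hBw : ‖w‖/2 = ‖q - r‖ := by
      rw [hwdef, norm_smul, Real.norm_ofNat]; ring
    have hpyth : ‖r - p‖^2 + ‖q - r‖^2 = dist p q ^ 2 := by
      rw [dist_eq_norm, hsq, hsq, hsq, ← Finset.sum_add_distrib]
      apply Finset.sum_congr rfl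
      intro i _
      simp only [PiLp.sub_apply, hrdef]
      rcases le_total (p i) (q i) with h | h
      · rw [min_eq_left h]; ring
      · rw [min_eq_right h]; ring
    have hreal : ‖u‖/2 + ‖w‖/2 ≤ Real.sqrt 2 * dist p q := by
      rw [hAu, hBw]
      have hA := norm_nonneg (r - p)
      have hB := norm_nonneg (q - r)
      have hD := dist_nonneg (x := p) (y := q)
      have hs : (0:ℝ) ≤ Real.sqrt 2 * dist p q := by positivity
      have h2 : (‖r - p‖ + ‖q - r‖)^2 ≤ (Real.sqrt 2 * dist p q)^2 := by
        have hsq2 : Real.sqrt 2 ^ 2 = 2 := Real.sq_sqrt (by norm_num)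
        nlinarith [sq_nonneg (‖r - p‖ - ‖q - r‖)]
      calc ‖r - p‖ + ‖q - r‖ = Real.sqrt ((‖r - p‖ + ‖q - r‖)^2) :=
            (Real.sqrt_sq (by positivity)).symm
        _ ≤ Real.sqrt ((Real.sqrt 2 * dist p q)^2) := Real.sqrt_le_sqrt h2
        _ = Real.sqrt 2 * dist p q := Real.sqrt_sq hs
    calc pathDist X p q ≤ eVariationOn γ (Set.Icc 0 1) :=
          sInf_le ⟨γ, hcont, hmem, hγ0, hγend, rfl⟩
      _ ≤ ENNReal.ofReal (‖u‖/2 + ‖w‖/2) := hlen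
      _ ≤ ENNReal.ofReal (Real.sqrt 2 * dist p q) := ENNReal.ofReal_le_ofReal hreal
end

section
/- Let C = [0,∞)^n with the Euclidean metric, let P, Q be coordinate faces of C with R = P ∩ Q, and let p ∈ P, q ∈ Q with projections p', q' ∈ R. Then the concatenated path [p,p'] ∪ [p',q'] ∪ [q',q], which lies in P ∪ Q, has length d_C(p,p') + d_C(p',q') + d_C(q',q), and satisfies (d_C(p,p') + d_C(q',q))² + d_C(p',q')² ≤ 2·d_C(p,q)². -/
lemma evar_seg {E : Type*} [NormedAddCommGroup E] [NormedSpace ℝ E]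
    (x y : E) {f : ℝ → ℝ} {a b : ℝ} (hab : a ≤ b)
    (hf : MonotoneOn f (Set.Icc a b)) (hfa : f a = 0) (hfb : f b = 1) :
    eVariationOn (fun t => x + f t • (y - x)) (Set.Icc a b) = edist x y := by
  have hg : LipschitzWith ‖y - x‖₊ (fun s : ℝ => x + s • (y - x)) := by
    apply LipschitzWith.of_dist_le_mul
    intro s t
    simp only [dist_eq_norm]
    rw [show x + s • (y - x) - (x + t • (y - x)) = (s - t) • (y - x) by module,
      norm_smul, Real.norm_eq_abs, mul_comm]
    simp
  apply le_antisymm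
  · calc eVariationOn (fun t => x + f t • (y - x)) (Set.Icc a b)
        = eVariationOn ((fun s : ℝ => x + s • (y - x)) ∘ f) (Set.Icc a b) := rfl
      _ ≤ ‖y - x‖₊ * eVariationOn f (Set.Icc a b) :=
          (hg.lipschitzOnWith (s := Set.univ)).comp_eVariationOn_le (Set.mapsTo_univ _ _)
      _ ≤ ‖y - x‖₊ * ENNReal.ofReal (f b - f a) := by
          gcongr
          have := hf.eVariationOn_le (a := a) (b := b)
            (Set.left_mem_Icc.2 hab) (Set.right_mem_Icc.2 hab)
          rwa [Set.inter_self] at this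
      _ = edist x y := by
          rw [hfa, hfb, sub_zero, ENNReal.ofReal_one, mul_one, edist_comm,
            edist_nndist, nndist_eq_nnnorm]
  · have h1 : x = x + f a • (y - x) := by rw [hfa]; module
    have h2 : y = x + f b • (y - x) := by rw [hfb]; module
    calc edist x y = edist (x + f a • (y - x)) (x + f b • (y - x)) := by rw [← h1, ← h2]
      _ ≤ eVariationOn (fun t => x + f t • (y - x)) (Set.Icc a b) :=
          eVariationOn.edist_le _ (Set.left_mem_Icc.2 hab) (Set.right_mem_Icc.2 hab)

lemma dist_sq_eq' (n : ℕ) (x y : EuclideanSpace ℝ (Fin n)) :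
    dist x y ^ 2 = ∑ i, (x i - y i) ^ 2 := by
  rw [EuclideanSpace.dist_eq, Real.sq_sqrt (Finset.sum_nonneg fun i _ => sq_nonneg _)]
  simp [Real.dist_eq, sq_abs]

/-- the concatenated piecewise-linear path `[p,p'] ∪ [p',q'] ∪ [q',q]`
lies in `P ∪ Q`, has length `d(p,p') + d(p',q') + d(q',q)`, and
`(d(p,p') + d(q',q))² + d(p',q')² ≤ 2·d(p,q)²`. -/
theorem cube_lemma_path (n : ℕ) (SP SQ : Finset (Fin n))
    (P Q : Set (EuclideanSpace ℝ (Fin n)))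
    (hP : P = {x | (∀ i, 0 ≤ x i) ∧ ∀ i, x i ≠ 0 → i ∈ SP})
    (hQ : Q = {x | (∀ i, 0 ≤ x i) ∧ ∀ i, x i ≠ 0 → i ∈ SQ})
    (p q p' q' : EuclideanSpace ℝ (Fin n)) (hp : p ∈ P) (hq : q ∈ Q)
    (hp' : ∀ i, p' i = if i ∈ SP ∩ SQ then p i else 0)
    (hq' : ∀ i, q' i = if i ∈ SP ∩ SQ then q i else 0) :
    (segment ℝ p p' ∪ segment ℝ p' q' ⊆ P) ∧ segment ℝ q' q ⊆ Q ∧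
    (∃ γ : ℝ → EuclideanSpace ℝ (Fin n), ContinuousOn γ (Set.Icc 0 1) ∧
      γ 0 = p ∧ γ 1 = q ∧ (∀ t ∈ Set.Icc (0 : ℝ) 1, γ t ∈ P ∪ Q) ∧
      eVariationOn γ (Set.Icc 0 1) =
        ENNReal.ofReal (dist p p' + dist p' q' + dist q' q)) ∧
    (dist p p' + dist q' q) ^ 2 + dist p' q' ^ 2 ≤ 2 * dist p q ^ 2 := by
  subst hP hQ
  obtain ⟨hp0, hpS⟩ := hp
  obtain ⟨hq0, hqS⟩ := hq
  -- basic facts about p', q'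
  have hp'0 : ∀ i, 0 ≤ p' i := fun i => by rw [hp' i]; split <;> simp [hp0 i]
  have hq'0 : ∀ i, 0 ≤ q' i := fun i => by rw [hq' i]; split <;> simp [hq0 i]
  have hp'S : ∀ i, p' i ≠ 0 → i ∈ SP ∩ SQ := fun i h => by
    rw [hp' i] at h; by_contra hc; rw [if_neg hc] at h; exact h rfl
  have hq'S : ∀ i, q' i ≠ 0 → i ∈ SP ∩ SQ := fun i h => by
    rw [hq' i] at h; by_contra hc; rw [if_neg hc] at h; exact h rfl
  have seg_mem : ∀ (S : Finset (Fin n)) (x y : EuclideanSpace ℝ (Fin n)),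
      (∀ i, 0 ≤ x i) → (∀ i, x i ≠ 0 → i ∈ S) → (∀ i, 0 ≤ y i) → (∀ i, y i ≠ 0 → i ∈ S) →
      segment ℝ x y ⊆ {z | (∀ i, 0 ≤ z i) ∧ ∀ i, z i ≠ 0 → i ∈ S} := by
    rintro S x y hx0 hxS hy0 hyS z ⟨a, b, ha, hb, hab, rfl⟩
    have hcoord : ∀ i, (a • x + b • y) i = a * x i + b * y i := fun i => rfl
    constructor
    · intro i
      rw [hcoord i]
      exact add_nonneg (mul_nonneg ha (hx0 i)) (mul_nonneg hb (hy0 i))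
    · intro i hzi
      by_contra hiS
      have hx : x i = 0 := by by_contra h; exact hiS (hxS i h)
      have hy : y i = 0 := by by_contra h; exact hiS (hyS i h)
      exact hzi (by rw [hcoord i, hx, hy]; ring)
  have hsub1 : segment ℝ p p' ∪ segment ℝ p' q' ⊆
      {x | (∀ i, 0 ≤ x i) ∧ ∀ i, x i ≠ 0 → i ∈ SP} := by
    apply Set.union_subset
    · exact seg_mem SP p p' hp0 hpS hp'0 (fun i h => (Finset.mem_inter.1 (hp'S i h)).1)
    · exact seg_mem SP p' q' hp'0 (fun i h => (Finset.mem_inter.1 (hp'S i h)).1)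
        hq'0 (fun i h => (Finset.mem_inter.1 (hq'S i h)).1)
  have hsub2 : segment ℝ q' q ⊆ {x | (∀ i, 0 ≤ x i) ∧ ∀ i, x i ≠ 0 → i ∈ SQ} :=
    seg_mem SQ q' q hq'0 (fun i h => (Finset.mem_inter.1 (hq'S i h)).2) hq0 hqS
  refine ⟨hsub1, hsub2, ?_, ?_⟩
  · -- the path
    set γ : ℝ → EuclideanSpace ℝ (Fin n) := fun t =>
      if t ≤ 1/3 then p + (3*t) • (p' - p)
      else if t ≤ 2/3 then p' + (3*t-1) • (q' - p')
      else q' + (3*t-2) • (q - q') with hγ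
    have hcont : Continuous γ := by
      apply Continuous.if_le
      · fun_prop
      · apply Continuous.if_le
        · fun_prop
        · fun_prop
        · fun_prop
        · fun_prop
        · intro t ht; rw [ht]; norm_num
      · fun_prop
      · fun_prop
      · intro t ht
        rw [ht]
        have : (1:ℝ)/3 ≤ 2/3 := by norm_num
        rw [if_pos this]
        norm_num
    have e1 : Set.EqOn γ (fun t => p + (fun t => 3*t) t • (p' - p)) (Set.Icc 0 (1/3 : ℝ)) := by
      intro t ht
      simp only [hγ]
      rw [if_pos ht.2]
    have e2 : Set.EqOn γ (fun t => p' + (fun t => 3*t-1) t • (q' - p'))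
        (Set.Icc (1/3 : ℝ) (2/3)) := by
      intro t ht
      simp only [hγ]
      rcases eq_or_lt_of_le ht.1 with h | h
      · rw [if_pos h.symm.le, ← h]
        norm_num
      · rw [if_neg (not_le.2 h), if_pos ht.2]
    have e3 : Set.EqOn γ (fun t => q' + (fun t => 3*t-2) t • (q - q'))
        (Set.Icc (2/3 : ℝ) 1) := by
      intro t ht
      simp only [hγ]
      have h13 : ¬ t ≤ 1/3 := by intro h; linarith [ht.1]
      rcases eq_or_lt_of_le ht.1 with h | h
      · rw [if_neg h13, if_pos h.symm.le, ← h]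
        norm_num
      · rw [if_neg h13, if_neg (not_le.2 h)]
    have v1 : eVariationOn γ (Set.Icc 0 (1/3 : ℝ)) = edist p p' := by
      rw [eVariationOn.eq_of_eqOn e1]
      exact evar_seg p p' (by norm_num)
        (fun s _ t _ h => by beta_reduce; linarith) (by norm_num) (by norm_num)
    have v2 : eVariationOn γ (Set.Icc (1/3 : ℝ) (2/3)) = edist p' q' := by
      rw [eVariationOn.eq_of_eqOn e2]
      exact evar_seg p' q' (by norm_num)
        (fun s _ t _ h => by beta_reduce; linarith) (by norm_num) (by norm_num)
    have v3 : eVariationOn γ (Set.Icc (2/3 : ℝ) 1) = edist q' q := by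
      rw [eVariationOn.eq_of_eqOn e3]
      exact evar_seg q' q (by norm_num)
        (fun s _ t _ h => by beta_reduce; linarith) (by norm_num) (by norm_num)
    have sp1 : eVariationOn γ (Set.Icc (0:ℝ) (1/3)) + eVariationOn γ (Set.Icc (1/3:ℝ) (2/3)) =
        eVariationOn γ (Set.Icc (0:ℝ) (2/3)) := by
      have h := eVariationOn.Icc_add_Icc γ (s := Set.Icc (0:ℝ) (2/3)) (a := 0) (b := 1/3)
        (c := 2/3) (by norm_num) (by norm_num) (by norm_num [Set.mem_Icc])
      rw [Set.Icc_inter_Icc, Set.Icc_inter_Icc, Set.Icc_inter_Icc] at h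
      norm_num at h
      convert h using 3 <;> norm_num
    have sp2 : eVariationOn γ (Set.Icc (0:ℝ) (2/3)) + eVariationOn γ (Set.Icc (2/3:ℝ) 1) =
        eVariationOn γ (Set.Icc (0:ℝ) 1) := by
      have h := eVariationOn.Icc_add_Icc γ (s := Set.Icc (0:ℝ) 1) (a := 0) (b := 2/3)
        (c := 1) (by norm_num) (by norm_num) (by norm_num [Set.mem_Icc])
      rw [Set.Icc_inter_Icc, Set.Icc_inter_Icc, Set.Icc_inter_Icc] at h
      norm_num at h
      convert h using 3 <;> norm_num
    refine ⟨γ, hcont.continuousOn, ?_, ?_, ?_, ?_⟩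
    · simp [hγ]
    · rw [hγ]
      norm_num
    · -- membership in P ∪ Q
      intro t ht
      by_cases h13 : t ≤ 1/3
      · left
        apply hsub1
        left
        rw [hγ]
        simp only [if_pos h13]
        exact ⟨1 - 3*t, 3*t, by linarith [ht.1], by linarith [ht.1], by ring, by module⟩
      · by_cases h23 : t ≤ 2/3
        · left
          apply hsub1
          right
          rw [hγ]
          simp only [if_neg h13, if_pos h23]
          exact ⟨2 - 3*t, 3*t - 1, by linarith, by linarith [not_le.1 h13], by ring, by module⟩
        · right
          apply hsub2
          rw [hγ]
          simp only [if_neg h13, if_neg h23]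
          exact ⟨3 - 3*t, 3*t - 2, by linarith [ht.2], by linarith [not_le.1 h23], by ring,
            by module⟩
    · rw [← sp2, ← sp1, v1, v2, v3, edist_dist, edist_dist, edist_dist,
        ← ENNReal.ofReal_add dist_nonneg dist_nonneg,
        ← ENNReal.ofReal_add (by positivity) dist_nonneg]
  · -- the inequality
    have key : dist p p' ^ 2 + dist p' q' ^ 2 + dist q' q ^ 2 = dist p q ^ 2 := by
      simp only [dist_sq_eq']
      rw [← Finset.sum_add_distrib, ← Finset.sum_add_distrib]
      refine Finset.sum_congr rfl fun i _ => ?_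
      rw [hp' i, hq' i]
      by_cases h : i ∈ SP ∩ SQ
      · simp [h]
      · have hz : p i = 0 ∨ q i = 0 := by
          rw [Finset.mem_inter, not_and_or] at h
          rcases h with h | h
          · exact Or.inl (by by_contra h'; exact h (hpS i h'))
          · exact Or.inr (by by_contra h'; exact h (hqS i h'))
        simp only [if_neg h]
        rcases hz with h' | h' <;> rw [h'] <;> ring
    nlinarith [dist_nonneg (x := p) (y := p'), dist_nonneg (x := q') (y := q),
      dist_nonneg (x := p') (y := q'), sq_nonneg (dist p p' - dist q' q),
      sq_nonneg (dist p' q')]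
end

section
/- Let {G_n = (V_n, E_n)} be a sequence of finite connected graphs with |V_n| → ∞, all vertex degrees between 1 and d, and suppose there exist maps f_n : V_n → Y into a metric space Y and unbounded non-decreasing functions ρ₁, ρ₂ : [0,∞) → [0,∞) with ρ₁(d_{G_n}(x,x')) ≤ d_Y(f_n(x), f_n(x')) ≤ ρ₂(d_{G_n}(x,x')) for all n and all x,x' ∈ V_n. Assume further that for each n there is a point ȳ_n ∈ Y (a barycenter) such that ∑_{v∈V_n} deg(v)·d_Y(f_n(v), ȳ_n)² ≤ (1/λ₁(G_n,Y))·∑_{{v,w}∈E_n} d_Y(f_n(v),f_n(w))² whenever λ₁(G_n,Y) > 0. Then liminf_{n→∞} λ₁(G_n, Y) = 0. -/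
open Finset Filter

lemma exists_adj_dist_le {V : Type*} (G : SimpleGraph V) {u v : V} {k : ℕ}
    (h : G.Reachable u v) (hd : G.dist u v = k + 1) :
    ∃ w, G.Adj w v ∧ G.dist u w ≤ k := by
  obtain ⟨p, hp⟩ := h.exists_walk_length_eq_dist
  rw [hd] at hp
  cases hq : p.reverse with
  | nil =>
      have := congrArg SimpleGraph.Walk.length hq
      simp [hp] at this
  | cons h' q =>
      refine ⟨_, h'.symm, ?_⟩
      have hl : q.length = k := by
        have := congrArg SimpleGraph.Walk.length hq
        simp [hp] at this
        omega
      calc G.dist u _ ≤ q.reverse.length := SimpleGraph.dist_le _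
        _ = k := by simp [hl]

lemma ball_card_le {V : Type*} [Fintype V] (G : SimpleGraph V) [DecidableRel G.Adj]
    (hconn : G.Connected) {d : ℕ} (hdeg : ∀ v, G.degree v ≤ d) (u : V) :
    ∀ k, (univ.filter fun v => G.dist u v ≤ k).card ≤ (d + 1) ^ k := by
  classical
  intro k; induction k with
  | zero =>
      have hsub : (univ.filter fun v => G.dist u v ≤ 0) ⊆ {u} := by
        intro v hv
        simp only [mem_filter, Nat.le_zero] at hv
        have : u = v := (hconn.dist_eq_zero_iff).mp hv.2
        simp [this.symm]
      simpa using (card_le_card hsub).trans_eq (by simp)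
  | succ k ih =>
      set g : V → V := fun v =>
        if h : G.dist u v = k + 1 then (exists_adj_dist_le G (hconn u v) h).choose else v with hg
      have hmaps : ∀ a ∈ univ.filter fun v => G.dist u v ≤ k + 1,
          g a ∈ univ.filter fun v => G.dist u v ≤ k := by
        intro a ha
        simp only [mem_filter, mem_univ, true_and] at ha ⊢
        by_cases h : G.dist u a = k + 1
        · simp only [hg, dif_pos h]
          exact (exists_adj_dist_le G (hconn u a) h).choose_spec.2
        · simp only [hg, dif_neg h]
          omega
      have hfib : ∀ b ∈ univ.filter fun v => G.dist u v ≤ k,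
          ((univ.filter fun v => G.dist u v ≤ k + 1).filter fun a => g a = b).card ≤ d + 1 := by
        intro b _
        have hsub : ((univ.filter fun v => G.dist u v ≤ k + 1).filter fun a => g a = b)
            ⊆ insert b (G.neighborFinset b) := by
          intro a ha
          simp only [mem_filter] at ha
          by_cases h : G.dist u a = k + 1
          · have hspec := (exists_adj_dist_le G (hconn u a) h).choose_spec.1
            have : g a = (exists_adj_dist_le G (hconn u a) h).choose := by simp [hg, dif_pos h]
            rw [this] at ha
            rw [ha.2] at hspec
            exact Finset.mem_insert_of_mem (by rwa [SimpleGraph.mem_neighborFinset])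
          · have : g a = a := by simp [hg, dif_neg h]
            rw [this] at ha
            simp [ha.2]
        calc _ ≤ (insert b (G.neighborFinset b)).card := card_le_card hsub
          _ ≤ (G.neighborFinset b).card + 1 := card_insert_le _ _
          _ ≤ d + 1 := by
              have := hdeg b
              rw [SimpleGraph.card_neighborFinset_eq_degree]
              omega
      calc (univ.filter fun v => G.dist u v ≤ k + 1).card
          ≤ (d + 1) * (univ.filter fun v => G.dist u v ≤ k).card :=
            card_le_mul_card_image_of_maps_to hmaps _ hfib
        _ ≤ (d + 1) * (d + 1) ^ k := Nat.mul_le_mul_left _ ih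
        _ = (d + 1) ^ (k + 1) := by ring


/-- if a sequence of finite connected graphs with `|V_n| → ∞` and degrees in
`[1,d]` embeds uniformly into a metric space `Y`, and `lam n` (standing for Wang's
invariant `λ₁(G_n,Y)`) is nonnegative and satisfies the barycenter inequality for the
embedding maps, then `liminf_n λ₁(G_n,Y) = 0`. -/
theorem liminf_wang_lamOne_eq_zero (V : ℕ → Type) [∀ n, Fintype (V n)]
    (G : ∀ n, SimpleGraph (V n)) [∀ n, DecidableRel (G n).Adj]
    (hconn : ∀ n, (G n).Connected)
    (d : ℕ) (hdeg : ∀ n v, (G n).degree v ≤ d) (hdeg1 : ∀ n v, 1 ≤ (G n).degree v)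
    (hcard : Tendsto (fun n => Fintype.card (V n)) atTop atTop)
    {Y : Type*} [MetricSpace Y] (f : ∀ n, V n → Y)
    (ρ₁ ρ₂ : ℝ → ℝ)
    (h1mono : MonotoneOn ρ₁ (Set.Ici 0)) (h2mono : MonotoneOn ρ₂ (Set.Ici 0))
    (h1unb : ∀ M : ℝ, ∃ t : ℝ, 0 ≤ t ∧ M < ρ₁ t)
    (h2unb : ∀ M : ℝ, ∃ t : ℝ, 0 ≤ t ∧ M < ρ₂ t)
    (hemb : ∀ n (x x' : V n),
      ρ₁ ((G n).dist x x' : ℝ) ≤ dist (f n x) (f n x') ∧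
        dist (f n x) (f n x') ≤ ρ₂ ((G n).dist x x' : ℝ))
    (lam : ℕ → ℝ) (hlam0 : ∀ n, 0 ≤ lam n)
    (hbary : ∀ n, 0 < lam n → ∃ ybar : Y,
      ∑ v : V n, ((G n).degree v : ℝ) * dist (f n v) ybar ^ 2 ≤
        (1 / lam n) *
          ((1 / 2) * ∑ u : V n, ∑ v : V n,
            if (G n).Adj u v then dist (f n u) (f n v) ^ 2 else 0)) :
    liminf (fun n => lam n) atTop = 0 := by
  classical
  have key : ∀ c : ℝ, 0 < c → ∀ᶠ n in atTop, lam n < c := by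
    intro c hc
    set C : ℝ := ρ₂ 1 with hCdef
    set B : ℝ := (d : ℝ) * C ^ 2 / c with hBdef
    have hB0 : 0 ≤ B := by positivity
    obtain ⟨t, ht0, htR⟩ := h1unb (2 * Real.sqrt (B + 1))
    set k := Nat.ceil t with hkdef
    set N := (d + 1) ^ k with hNdef
    have main : ∀ n, 2 * N < Fintype.card (V n) → lam n < c := by
      intro n hn
      by_contra hlt
      push_neg at hlt
      have hlamn : 0 < lam n := lt_of_lt_of_le hc hlt
      obtain ⟨ybar, hybar⟩ := hbary n hlamn
      set m := Fintype.card (V n) with hm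
      have hm0 : 0 < m := lt_of_le_of_lt (Nat.zero_le _) hn
      -- edge bound
      have hedge : ∀ u v : V n, (G n).Adj u v → dist (f n u) (f n v) ≤ C := by
        intro u v huv
        have hd1 : (G n).dist u v = 1 := SimpleGraph.dist_eq_one_iff_adj.mpr huv
        have := (hemb n u v).2
        rw [hd1] at this
        simpa using this
      -- double sum bound
      set D : ℝ := ∑ u : V n, ∑ v : V n,
          if (G n).Adj u v then dist (f n u) (f n v) ^ 2 else 0 with hDdef
      have hD0 : 0 ≤ D := by
        apply Finset.sum_nonneg; intro u _
        apply Finset.sum_nonneg; intro v _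
        split
        · exact sq_nonneg _
        · exact le_refl 0
      have hD : D ≤ (m : ℝ) * ((d : ℝ) * C ^ 2) := by
        rw [hDdef]
        calc (∑ u : V n, ∑ v : V n, if (G n).Adj u v then dist (f n u) (f n v) ^ 2 else 0)
            ≤ ∑ _u : V n, (d : ℝ) * C ^ 2 := by
              apply Finset.sum_le_sum
              intro u _
              have step1 : (∑ v : V n, if (G n).Adj u v then dist (f n u) (f n v) ^ 2 else 0)
                  ≤ ∑ v : V n, if (G n).Adj u v then C ^ 2 else 0 := by
                apply Finset.sum_le_sum
                intro v _
                split
                · exact pow_le_pow_left₀ dist_nonneg (hedge u v (by assumption)) 2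
                · exact le_refl 0
              refine step1.trans ?_
              rw [← Finset.sum_filter]
              rw [Finset.sum_const, nsmul_eq_mul]
              have hdegC : (univ.filter ((G n).Adj u)).card = (G n).degree u := by
                rw [← SimpleGraph.card_neighborFinset_eq_degree]
                congr 1
                ext w
                simp [SimpleGraph.mem_neighborFinset]
              rw [hdegC]
              have : ((G n).degree u : ℝ) ≤ (d : ℝ) := by exact_mod_cast hdeg n u
              exact mul_le_mul_of_nonneg_right this (sq_nonneg _)
          _ = (m : ℝ) * ((d : ℝ) * C ^ 2) := by
              rw [Finset.sum_const, nsmul_eq_mul]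
              congr 1
      -- sum of squared distances bound
      have hS : (∑ v : V n, dist (f n v) ybar ^ 2) ≤ (m : ℝ) * B / 2 := by
        have h1 : (∑ v : V n, dist (f n v) ybar ^ 2)
            ≤ ∑ v : V n, ((G n).degree v : ℝ) * dist (f n v) ybar ^ 2 := by
          apply Finset.sum_le_sum
          intro v _
          refine le_mul_of_one_le_left (sq_nonneg _) ?_
          exact_mod_cast hdeg1 n v
        have h2 : (1 / lam n) * ((1 / 2) * D) ≤ (1 / c) * ((1 / 2) * D) := by
          apply mul_le_mul_of_nonneg_right _ (by linarith)
          exact one_div_le_one_div_of_le hc hlt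
        have h3 : (1 / c) * ((1 / 2) * D) ≤ (1 / c) * ((1 / 2) * ((m : ℝ) * ((d : ℝ) * C ^ 2))) := by
          apply mul_le_mul_of_nonneg_left _ (by positivity)
          linarith
        have heq : (1 / c) * ((1 / 2) * ((m : ℝ) * ((d : ℝ) * C ^ 2))) = (m : ℝ) * B / 2 := by
          rw [hBdef]; field_simp
        calc (∑ v : V n, dist (f n v) ybar ^ 2)
            ≤ ∑ v : V n, ((G n).degree v : ℝ) * dist (f n v) ybar ^ 2 := h1
          _ ≤ (1 / lam n) * ((1 / 2) * D) := hybar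
          _ ≤ (m : ℝ) * B / 2 := by linarith
      -- Markov: most vertices close to ybar
      set T := univ.filter (fun v : V n => dist (f n v) ybar ^ 2 ≤ B + 1) with hTdef
      set Tc := univ.filter (fun v : V n => ¬ (dist (f n v) ybar ^ 2 ≤ B + 1)) with hTcdef
      have hTc : (Tc.card : ℝ) * (B + 1) ≤ ∑ v : V n, dist (f n v) ybar ^ 2 := by
        calc (Tc.card : ℝ) * (B + 1) = ∑ _v ∈ Tc, (B + 1) := by
              rw [Finset.sum_const, nsmul_eq_mul]
          _ ≤ ∑ v ∈ Tc, dist (f n v) ybar ^ 2 := by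
              apply Finset.sum_le_sum
              intro v hv
              exact le_of_lt (lt_of_not_ge (Finset.mem_filter.mp hv).2)
          _ ≤ ∑ v : V n, dist (f n v) ybar ^ 2 :=
              Finset.sum_le_sum_of_subset_of_nonneg (Finset.filter_subset _ _)
                (fun v _ _ => sq_nonneg _)
      have hsplit : T.card + Tc.card = m := by
        rw [hTdef, hTcdef, hm]
        rw [Finset.card_filter_add_card_filter_not]
        exact (Finset.card_univ)
      have hTcard : ((m : ℝ) / 2) ≤ (T.card : ℝ) := by
        have hTcle : (Tc.card : ℝ) ≤ (m : ℝ) / 2 := by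
          nlinarith [hTc.trans hS, Nat.cast_nonneg (α := ℝ) Tc.card, Nat.cast_nonneg (α := ℝ) m]
        have : (T.card : ℝ) + (Tc.card : ℝ) = (m : ℝ) := by exact_mod_cast hsplit
        linarith
      have hTN : (N : ℝ) < (T.card : ℝ) := by
        have hmN : (2 * N : ℝ) < (m : ℝ) := by exact_mod_cast hn
        linarith
      have hTposN : N < T.card := by exact_mod_cast hTN
      obtain ⟨x₀, hx₀⟩ := Finset.card_pos.mp (lt_of_le_of_lt (Nat.zero_le _) hTposN)
      -- T is contained in a graph ball of radius k around x₀
      have hclose : ∀ v ∈ T, dist (f n v) ybar ≤ Real.sqrt (B + 1) := by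
        intro v hv
        have := (Finset.mem_filter.mp hv).2
        exact (Real.le_sqrt dist_nonneg (by linarith)).mpr this
      have hsub : T ⊆ univ.filter (fun v => (G n).dist x₀ v ≤ k) := by
        intro v hv
        have h2R : dist (f n x₀) (f n v) ≤ 2 * Real.sqrt (B + 1) := by
          have := dist_triangle_right (f n x₀) (f n v) ybar
          have h1' := hclose x₀ hx₀
          have h2' := hclose v hv
          linarith
        have hlow := (hemb n x₀ v).1
        have hρlt : ρ₁ (((G n).dist x₀ v : ℕ) : ℝ) < ρ₁ t := lt_of_le_of_lt (hlow.trans h2R) htR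
        have hdlt : (((G n).dist x₀ v : ℕ) : ℝ) < t := by
          by_contra hge
          push_neg at hge
          exact absurd (h1mono ht0 (Set.mem_Ici.mpr (Nat.cast_nonneg _)) hge)
            (not_le.mpr hρlt)
        have hdk : (((G n).dist x₀ v : ℕ) : ℝ) < (k : ℝ) := by
          calc (((G n).dist x₀ v : ℕ) : ℝ) < t := hdlt
            _ ≤ (k : ℝ) := Nat.le_ceil t
        have : (G n).dist x₀ v < k := by exact_mod_cast hdk
        simp only [Finset.mem_filter, Finset.mem_univ, true_and]
        omega
      have hfinal : T.card ≤ N := by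
        calc T.card ≤ (univ.filter (fun v => (G n).dist x₀ v ≤ k)).card := card_le_card hsub
          _ ≤ (d + 1) ^ k := ball_card_le (G n) (hconn n) (hdeg n) x₀ k
          _ = N := rfl
      omega
    filter_upwards [hcard.eventually_gt_atTop (2 * N)] with n hn using main n hn
  -- conclude liminf = 0
  have hbdd : IsBoundedUnder (· ≥ ·) atTop fun n => lam n :=
    ⟨0, Filter.eventually_map.mpr (Filter.Eventually.of_forall hlam0)⟩
  have hcob : IsCoboundedUnder (· ≥ ·) atTop fun n => lam n := by
    apply Filter.IsCobounded.of_frequently_le (l := (1 : ℝ))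
    exact Filter.Eventually.frequently (Filter.eventually_map.mpr
      ((key 1 one_pos).mono fun n h => le_of_lt h))
  have hle : ∀ c : ℝ, 0 < c → liminf (fun n => lam n) atTop ≤ c := by
    intro c hc
    exact liminf_le_of_frequently_le
      (Filter.Eventually.frequently ((key c hc).mono fun n h => le_of_lt h)) hbdd
  have hge : (0 : ℝ) ≤ liminf (fun n => lam n) atTop :=
    le_liminf_of_le hcob (Filter.Eventually.of_forall hlam0)
  by_contra hne
  have hpos : 0 < liminf (fun n => lam n) atTop := lt_of_le_of_ne hge (Ne.symm hne)
  have := hle _ (half_pos hpos)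
  linarith
end

section
/- Let Y be a metric space and T a metric space with basepoint O_T such that there is a map f : T → H to a Hilbert space with ‖f(v)‖ = d(O_T, v) and d(v,w)/D ≤ ‖f(v) − f(w)‖ ≤ d(v,w) for all v,w ∈ T, where D ≥ 1. Then for every finitely supported probability measure μ on T with barycenter O_T (i.e., O_T minimizes q ↦ ∑ wᵢ d(q,pᵢ)² and T is complete CAT(0)), δ(μ) ≤ 1 − 1/D². In particular, if D ≤ √2, then δ(μ) ≤ 1/2. -/
open Finset

lemma variance_identity {H : Type*} [NormedAddCommGroup H] [InnerProductSpace ℝ H]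
    (m : ℕ) (w : Fin m → ℝ) (x : Fin m → H) (hw1 : ∑ i, w i = 1) :
    ‖∑ i, w i • x i‖ ^ 2 =
      ∑ i, w i * ‖x i‖ ^ 2 - (1/2) * ∑ i, ∑ j, w i * w j * ‖x i - x j‖ ^ 2 := by
  have hinner : ‖∑ i, w i • x i‖ ^ 2 = ∑ i, ∑ j, w i * w j * (inner ℝ (x i) (x j) : ℝ) := by
    rw [← real_inner_self_eq_norm_sq, sum_inner]
    refine Finset.sum_congr rfl fun i _ => ?_
    rw [real_inner_smul_left, inner_sum, Finset.mul_sum]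
    refine Finset.sum_congr rfl fun j _ => ?_
    rw [real_inner_smul_right]; ring
  have hA : ∑ i : Fin m, ∑ j : Fin m, w i * w j * ‖x i‖ ^ 2 = ∑ i, w i * ‖x i‖ ^ 2 := by
    refine Finset.sum_congr rfl fun i _ => ?_
    have h : ∑ j : Fin m, w i * w j * ‖x i‖ ^ 2 = (w i * ‖x i‖ ^ 2) * ∑ j, w j := by
      rw [Finset.mul_sum]; exact Finset.sum_congr rfl fun j _ => by ring
    rw [h, hw1, mul_one]
  have hB : ∑ i : Fin m, ∑ j : Fin m, w i * w j * ‖x j‖ ^ 2 = ∑ j, w j * ‖x j‖ ^ 2 := by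
    rw [Finset.sum_comm]
    refine Finset.sum_congr rfl fun j _ => ?_
    have h : ∑ i : Fin m, w i * w j * ‖x j‖ ^ 2 = (w j * ‖x j‖ ^ 2) * ∑ i, w i := by
      rw [Finset.mul_sum]; exact Finset.sum_congr rfl fun i _ => by ring
    rw [h, hw1, mul_one]
  have hexp : ∑ i : Fin m, ∑ j : Fin m, w i * w j * ‖x i - x j‖ ^ 2 =
      (∑ i : Fin m, ∑ j : Fin m, w i * w j * ‖x i‖ ^ 2)
      + (∑ i : Fin m, ∑ j : Fin m, w i * w j * ‖x j‖ ^ 2)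
      - 2 * ∑ i, ∑ j, w i * w j * (inner ℝ (x i) (x j) : ℝ) := by
    have step : ∑ i : Fin m, ∑ j : Fin m, w i * w j * ‖x i - x j‖ ^ 2 =
        ∑ i : Fin m, ∑ j : Fin m, (w i * w j * ‖x i‖ ^ 2 + w i * w j * ‖x j‖ ^ 2
          - 2 * (w i * w j * (inner ℝ (x i) (x j) : ℝ))) := by
      refine Finset.sum_congr rfl fun i _ => Finset.sum_congr rfl fun j _ => ?_
      rw [norm_sub_sq_real]; ring
    rw [step]
    simp only [Finset.sum_add_distrib, Finset.sum_sub_distrib, ← Finset.mul_sum]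
  rw [hinner, hA, hB] at *
  linarith [hexp]

/-- The variance inequality at the barycenter of a CAT(0) space. -/
lemma variance_ineq {T : Type*} [MetricSpace T] (m : ℕ) (w : Fin m → ℝ) (p : Fin m → T)
    (hw : ∀ i, 0 ≤ w i) (hw1 : ∑ i, w i = 1) (O : T)
    (hcat : ∀ x y : T, ∃ mid : T, dist x mid = dist x y / 2 ∧ dist y mid = dist x y / 2 ∧
      ∀ z : T, dist z mid ^ 2 ≤ (dist z x ^ 2 + dist z y ^ 2) / 2 - dist x y ^ 2 / 4)
    (hbar : ∀ q : T, ∑ i, w i * dist O (p i) ^ 2 ≤ ∑ i, w i * dist q (p i) ^ 2)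
    (q : T) :
    dist O q ^ 2 ≤ (∑ i, w i * dist q (p i) ^ 2) - ∑ i, w i * dist O (p i) ^ 2 := by
  set F : T → ℝ := fun z => ∑ i, w i * dist z (p i) ^ 2 with hF
  have hFO : F O = ∑ i, w i * dist O (p i) ^ 2 := rfl
  have key : ∀ n : ℕ, ∀ r : T,
      dist O r ^ 2 - (F r - F O) ≤ dist O r ^ 2 * (1/2 : ℝ) ^ n := by
    intro n
    induction n with
    | zero => intro r; have := hbar r; simp only [pow_zero, mul_one]
              have h := hbar r
              simp only [hF, hFO]; linarith
    | succ n ih =>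
      intro r
      obtain ⟨mid, h1, h2, h3⟩ := hcat O r
      have hFm : F mid ≤ (F O + F r) / 2 - dist O r ^ 2 / 4 := by
        have step : F mid ≤
            ∑ i, w i * ((dist O (p i) ^ 2 + dist r (p i) ^ 2) / 2 - dist O r ^ 2 / 4) := by
          refine Finset.sum_le_sum fun i _ => mul_le_mul_of_nonneg_left ?_ (hw i)
          have := h3 (p i)
          rwa [dist_comm (p i) mid, dist_comm (p i) O, dist_comm (p i) r] at this
        refine step.trans_eq ?_
        have e1 : ∑ i, w i * ((dist O (p i) ^ 2 + dist r (p i) ^ 2) / 2 - dist O r ^ 2 / 4)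
            = ∑ i, (w i * dist O (p i) ^ 2 / 2 + w i * dist r (p i) ^ 2 / 2
                - w i * (dist O r ^ 2 / 4)) :=
          Finset.sum_congr rfl fun i _ => by ring
        rw [e1, Finset.sum_sub_distrib, Finset.sum_add_distrib, ← Finset.sum_div,
          ← Finset.sum_div, ← Finset.sum_mul, hw1]
        ring
      have hmid2 : dist O mid ^ 2 = dist O r ^ 2 / 4 := by rw [h1]; ring
      have ihm := ih mid
      rw [hmid2] at ihm
      rw [pow_succ ((1:ℝ)/2) n]
      linarith [hFm, ihm]
  have ht : Filter.Tendsto (fun n : ℕ => dist O q ^ 2 * (1/2 : ℝ) ^ n)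
      Filter.atTop (nhds 0) := by
    have h0 := tendsto_pow_atTop_nhds_zero_of_lt_one (by norm_num : (0:ℝ) ≤ 1/2)
      (by norm_num : (1/2 : ℝ) < 1)
    simpa using h0.const_mul (dist O q ^ 2)
  have := ge_of_tendsto' ht (fun n => key n q)
  simp only [hF, hFO] at this ⊢
  linarith

/-- if `T` is a complete CAT(0) space (midpoint comparison formulation)
with basepoint `O` admitting a radial map `f` to a Hilbert space with distortion
`D ≥ 1`, then every finitely supported probability measure `μ = ∑ wᵢ Dirac_{pᵢ}` with
barycenter `O` satisfies `δ(μ) ≤ 1 − 1/D²`, witnessed by `f`; in particular if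
`D ≤ √2` then `δ(μ) ≤ 1/2`. -/
theorem delta_le_of_radial_distortion {T : Type*} [MetricSpace T] [CompleteSpace T]
    (hcat : ∀ x y : T, ∃ mid : T, dist x mid = dist x y / 2 ∧ dist y mid = dist x y / 2 ∧
      ∀ z : T, dist z mid ^ 2 ≤ (dist z x ^ 2 + dist z y ^ 2) / 2 - dist x y ^ 2 / 4)
    (O : T)
    {H : Type*} [NormedAddCommGroup H] [InnerProductSpace ℝ H] [CompleteSpace H]
    (f : T → H) (D : ℝ) (hD : 1 ≤ D)
    (hrad : ∀ v : T, ‖f v‖ = dist O v)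
    (hlow : ∀ v w : T, dist v w / D ≤ ‖f v - f w‖)
    (hup : ∀ v w : T, ‖f v - f w‖ ≤ dist v w)
    (m : ℕ) (w : Fin m → ℝ) (p : Fin m → T)
    (hw : ∀ i, 0 ≤ w i) (hw1 : ∑ i, w i = 1)
    (hbar : ∀ q : T, ∑ i, w i * dist O (p i) ^ 2 ≤ ∑ i, w i * dist q (p i) ^ 2) :
    ‖∑ i, w i • f (p i)‖ ^ 2 ≤ (1 - 1 / D ^ 2) * ∑ i, w i * ‖f (p i)‖ ^ 2 ∧
      (D ≤ Real.sqrt 2 →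
        ‖∑ i, w i • f (p i)‖ ^ 2 ≤ (1 / 2) * ∑ i, w i * ‖f (p i)‖ ^ 2) := by
  have hD0 : (0:ℝ) < D := lt_of_lt_of_le one_pos hD
  have hD2 : (0:ℝ) < D ^ 2 := by positivity
  set V : ℝ := ∑ i, w i * dist O (p i) ^ 2 with hV
  have hVeq : ∑ i, w i * ‖f (p i)‖ ^ 2 = V := by
    exact Finset.sum_congr rfl fun i _ => by rw [hrad]
  -- the double sum of distances dominates 2V
  have hS : 2 * V ≤ ∑ i, ∑ j, w i * w j * dist (p i) (p j) ^ 2 := by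
    have hj : ∀ j : Fin m, dist O (p j) ^ 2 ≤
        (∑ i, w i * dist (p j) (p i) ^ 2) - V :=
      fun j => variance_ineq m w p hw hw1 O hcat hbar (p j)
    have h1 : V ≤ ∑ j, w j * ((∑ i, w i * dist (p j) (p i) ^ 2) - V) :=
      Finset.sum_le_sum fun j _ => mul_le_mul_of_nonneg_left (hj j) (hw j)
    have h2 : ∑ j, w j * ((∑ i, w i * dist (p j) (p i) ^ 2) - V)
        = (∑ j, ∑ i, w j * w i * dist (p j) (p i) ^ 2) - V := by
      simp only [mul_sub]
      rw [Finset.sum_sub_distrib, ← Finset.sum_mul, hw1, one_mul]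
      congr 1
      refine Finset.sum_congr rfl fun j _ => ?_
      rw [Finset.mul_sum]
      exact Finset.sum_congr rfl fun i _ => by ring
    have h3 : ∑ j, ∑ i, w j * w i * dist (p j) (p i) ^ 2
        = ∑ i, ∑ j, w i * w j * dist (p i) (p j) ^ 2 := rfl
    rw [h2, h3] at h1
    linarith
  -- lower distortion bound on squared norms
  have hlow2 : ∀ i j : Fin m, dist (p i) (p j) ^ 2 / D ^ 2 ≤ ‖f (p i) - f (p j)‖ ^ 2 := by
    intro i j
    have h := hlow (p i) (p j)
    have h0 : (0:ℝ) ≤ dist (p i) (p j) / D := div_nonneg dist_nonneg hD0.le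
    calc dist (p i) (p j) ^ 2 / D ^ 2 = (dist (p i) (p j) / D) ^ 2 := by
          rw [div_pow]
      _ ≤ ‖f (p i) - f (p j)‖ ^ 2 := pow_le_pow_left₀ h0 h 2
  have hSum : (2 * V) / D ^ 2 ≤ ∑ i, ∑ j, w i * w j * ‖f (p i) - f (p j)‖ ^ 2 := by
    have hA : ∑ i, ∑ j, w i * w j * (dist (p i) (p j) ^ 2 / D ^ 2)
        ≤ ∑ i, ∑ j, w i * w j * ‖f (p i) - f (p j)‖ ^ 2 :=
      Finset.sum_le_sum fun i _ => Finset.sum_le_sum fun j _ =>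
        mul_le_mul_of_nonneg_left (hlow2 i j) (mul_nonneg (hw i) (hw j))
    have hB : ∑ i, ∑ j, w i * w j * (dist (p i) (p j) ^ 2 / D ^ 2)
        = (∑ i, ∑ j, w i * w j * dist (p i) (p j) ^ 2) / D ^ 2 := by
      rw [Finset.sum_div]
      refine Finset.sum_congr rfl fun i _ => ?_
      rw [Finset.sum_div]
      exact Finset.sum_congr rfl fun j _ => by ring
    have hC : (2 * V) / D ^ 2
        ≤ (∑ i, ∑ j, w i * w j * dist (p i) (p j) ^ 2) / D ^ 2 :=
      div_le_div_of_nonneg_right hS hD2.le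
    calc (2 * V) / D ^ 2 ≤ _ := hC
      _ = ∑ i, ∑ j, w i * w j * (dist (p i) (p j) ^ 2 / D ^ 2) := hB.symm
      _ ≤ _ := hA
  have vid := variance_identity m w (fun i => f (p i)) hw1
  have main1 : ‖∑ i, w i • f (p i)‖ ^ 2 ≤ (1 - 1 / D ^ 2) * ∑ i, w i * ‖f (p i)‖ ^ 2 := by
    rw [vid, hVeq]
    have e : (1 - 1 / D ^ 2) * V = V - (1/2) * ((2 * V) / D ^ 2) := by ring
    rw [e]
    linarith [hSum]
  refine ⟨main1, fun hDle => ?_⟩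
  have hD2le : D ^ 2 ≤ 2 := by
    have := pow_le_pow_left₀ hD0.le hDle 2
    rwa [Real.sq_sqrt (by norm_num : (0:ℝ) ≤ 2)] at this
  have hhalf : (1:ℝ)/2 ≤ 1 / D ^ 2 := by
    apply one_div_le_one_div_of_le hD2 hD2le
  have hVnn : 0 ≤ ∑ i, w i * ‖f (p i)‖ ^ 2 :=
    Finset.sum_nonneg fun i _ => mul_nonneg (hw i) (sq_nonneg _)
  calc ‖∑ i, w i • f (p i)‖ ^ 2 ≤ (1 - 1 / D ^ 2) * ∑ i, w i * ‖f (p i)‖ ^ 2 := main1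
    _ ≤ (1/2) * ∑ i, w i * ‖f (p i)‖ ^ 2 :=
      mul_le_mul_of_nonneg_right (by linarith) hVnn
end
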